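/- Let A_ρ ⊆ M_3 be a structural matrix algebra distinct from the algebra D_3 of 3×3 diagonal matrices. The following statements are equivalent: (a) for each (i,j) ∈ ρ with i ≠ j, the set (ρ(i) ∪ ρ⁻¹(i)) ∩ (ρ(j) ∪ ρ⁻¹(j)) has at least 3 elements; (b) there exist distinct i, j ∈ {1,2,3} such that ρ(i) = ρ⁻¹(j) = {1,2,3}; (c) there exists a permutation π of {1,2,3} such that R_π A_ρ R_π⁻¹ is a block upper-triangular subalgebra of M_3, where R_π = Σ_k E_{k,π(k)} is the permutation matrix associated to π. -/

import Mathlib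

set_option maxRecDepth 10000

open Matrix

private lemma key1 : ∀ r : Fin 3 → Fin 3 → Bool,
    (∀ i, r i i = true) → (∀ i j k, r i j = true → r j k = true → r i k = true) →
    (∃ i j, i ≠ j ∧ r i j = true) →
    ((∀ i j, r i j = true → i ≠ j →
        ∀ k, (r i k = true ∨ r k i = true) ∧ (r j k = true ∨ r k j = true)) ↔
      (∃ i j : Fin 3, i ≠ j ∧ (∀ k, r i k = true) ∧ (∀ k, r k j = true))) := by decide

private lemma key2 : ∀ r : Fin 3 → Fin 3 → Bool,
    (∀ i, r i i = true) → (∀ i j k, r i j = true → r j k = true → r i k = true) →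
    ((∃ i j : Fin 3, i ≠ j ∧ (∀ k, r i k = true) ∧ (∀ k, r k j = true)) ↔
      (∃ π : Equiv.Perm (Fin 3), ∃ c : Fin 3 → Fin 3, (∀ a b, a ≤ b → c a ≤ c b) ∧
        ∀ i j, r (π i) (π j) = true ↔ c i ≤ c j)) := by decide

private lemma rank3 (c : Fin 3 → ℕ) :
    ∃ c' : Fin 3 → Fin 3, ∀ i j, (c' i ≤ c' j ↔ c i ≤ c j) := by
  refine ⟨fun k => ⟨(Finset.univ.filter fun l => c l < c k).card, ?_⟩, ?_⟩
  · have hne : (Finset.univ.filter fun l => c l < c k) ≠ Finset.univ := by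
      intro h
      have : k ∈ Finset.univ.filter fun l => c l < c k := by
        rw [h]; exact Finset.mem_univ k
      simp at this
    have := Finset.card_lt_card ((Finset.ssubset_univ_iff).mpr hne)
    simpa using this
  · intro i j
    rw [Fin.mk_le_mk]
    constructor
    · intro h
      by_contra hc
      push_neg at hc
      have hsub : (Finset.univ.filter fun l => c l < c j) ⊂
          (Finset.univ.filter fun l => c l < c i) := by
        rw [Finset.ssubset_def]
        constructor
        · exact Finset.monotone_filter_right _ (fun l _ hl => lt_trans hl hc)
        · intro hsub
          have := hsub (Finset.mem_filter.mpr ⟨Finset.mem_univ j, hc⟩)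
          simp at this
      exact absurd h (not_le.mpr (Finset.card_lt_card hsub))
    · intro h
      exact Finset.card_le_card
        (Finset.monotone_filter_right _ (fun l _ hl => lt_of_lt_of_le hl h))

private lemma key2' (r : Fin 3 → Fin 3 → Bool)
    (h1 : ∀ i, r i i = true) (h2 : ∀ i j k, r i j = true → r j k = true → r i k = true) :
    (∃ i j : Fin 3, i ≠ j ∧ (∀ k, r i k = true) ∧ (∀ k, r k j = true)) ↔
      (∃ π : Equiv.Perm (Fin 3), ∃ c : Fin 3 → ℕ, Monotone c ∧
        ∀ i j, r (π i) (π j) = true ↔ c i ≤ c j) := by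
  rw [key2 r h1 h2]
  constructor
  · rintro ⟨π, c, hmono, hpatt⟩
    refine ⟨π, fun k => (c k : ℕ), fun a b hab => ?_, fun i j => ?_⟩
    · exact Fin.le_def.mp (hmono a b hab)
    · rw [hpatt i j]; exact Fin.le_def.symm
  · rintro ⟨π, c, hmono, hpatt⟩
    obtain ⟨c', hc'⟩ := rank3 c
    exact ⟨π, c', fun a b hab => (hc' a b).mpr (hmono hab),
      fun i j => (hpatt i j).trans (hc' i j).symm⟩

private lemma patt_mp (σ τ : Fin 3 → Fin 3 → Prop)
    (h : {X : Matrix (Fin 3) (Fin 3) ℂ | ∀ i j, ¬ σ i j → X i j = 0} ⊆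
         {X : Matrix (Fin 3) (Fin 3) ℂ | ∀ i j, ¬ τ i j → X i j = 0}) :
    ∀ i j, σ i j → τ i j := by
  intro i j hσ
  by_contra hτ
  have hE : (Matrix.of fun i' j' => if i' = i ∧ j' = j then (1 : ℂ) else 0) ∈
      {X : Matrix (Fin 3) (Fin 3) ℂ | ∀ i j, ¬ σ i j → X i j = 0} := by
    intro i' j' h'
    by_cases hij : i' = i ∧ j' = j
    · exact absurd (hij.1 ▸ hij.2 ▸ hσ) h'
    · simp [Matrix.of_apply, hij]
  have := h hE i j hτ
  simp at this

private lemma perm_matrix_eq (π : Equiv.Perm (Fin 3)) :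
    (Matrix.of fun k l => if π k = l then (1 : ℂ) else 0) = π.toPEquiv.toMatrix := by
  ext i j
  simp [PEquiv.toMatrix, Equiv.toPEquiv_apply, Option.mem_def, eq_comm]

private lemma perm_inv (π : Equiv.Perm (Fin 3)) :
    ((π.toPEquiv.toMatrix : Matrix (Fin 3) (Fin 3) ℂ))⁻¹ = π.symm.toPEquiv.toMatrix := by
  apply Matrix.inv_eq_right_inv
  rw [← PEquiv.toMatrix_trans, ← Equiv.toPEquiv_trans, Equiv.self_trans_symm,
    Equiv.toPEquiv_refl, PEquiv.toMatrix_refl]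

private lemma conj_apply (π : Equiv.Perm (Fin 3)) (X : Matrix (Fin 3) (Fin 3) ℂ) :
    (Matrix.of fun k l => if π k = l then (1 : ℂ) else 0) * X *
      (Matrix.of fun k l => if π k = l then (1 : ℂ) else 0)⁻¹ = X.submatrix π π := by
  rw [perm_matrix_eq, perm_inv, PEquiv.toMatrix_toPEquiv_mul, PEquiv.mul_toMatrix_toPEquiv]
  ext i j
  simp


theorem stmt_12 (ρ : Fin 3 → Fin 3 → Prop)
    (hrefl : ∀ i, ρ i i) (htrans : ∀ i j k, ρ i j → ρ j k → ρ i k)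
    (A : Set (Matrix (Fin 3) (Fin 3) ℂ))
    (hA : A = {X : Matrix (Fin 3) (Fin 3) ℂ | ∀ i j, ¬ ρ i j → X i j = 0})
    (hnotdiag : A ≠ {X : Matrix (Fin 3) (Fin 3) ℂ | X.IsDiag}) :
    ((∀ i j, ρ i j → i ≠ j →
        3 ≤ (({k | ρ i k} ∪ {k | ρ k i}) ∩ ({k | ρ j k} ∪ {k | ρ k j})).ncard) ↔
      (∃ i j : Fin 3, i ≠ j ∧ (∀ k, ρ i k) ∧ (∀ k, ρ k j))) ∧
    ((∃ i j : Fin 3, i ≠ j ∧ (∀ k, ρ i k) ∧ (∀ k, ρ k j)) ↔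
      (∃ π : Equiv.Perm (Fin 3), ∃ c : Fin 3 → ℕ, Monotone c ∧
        {Y : Matrix (Fin 3) (Fin 3) ℂ | ∃ X ∈ A,
            Y = (Matrix.of fun k l => if π k = l then (1 : ℂ) else 0) * X *
              (Matrix.of fun k l => if π k = l then (1 : ℂ) else 0)⁻¹} =
          {X : Matrix (Fin 3) (Fin 3) ℂ | X.BlockTriangular c})) := by
  classical
  subst hA
  -- ρ is not the equality relation
  have hne : ∃ i j : Fin 3, i ≠ j ∧ ρ i j := by
    by_contra h
    push_neg at h
    apply hnotdiag
    ext X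
    simp only [Set.mem_setOf_eq]
    constructor
    · intro hX i j hij
      exact hX i j (h i j hij)
    · intro hX i j hρ
      by_cases hij : i = j
      · exact absurd (hij ▸ hrefl i) hρ
      · exact hX hij
  set r : Fin 3 → Fin 3 → Bool := fun i j => decide (ρ i j) with hrdef
  have hr : ∀ i j, r i j = true ↔ ρ i j := fun i j => decide_eq_true_iff
  have hrrefl : ∀ i, r i i = true := fun i => (hr i i).mpr (hrefl i)
  have hrtrans : ∀ i j k, r i j = true → r j k = true → r i k = true :=
    fun i j k h1 h2 => (hr i k).mpr (htrans i j k ((hr i j).mp h1) ((hr j k).mp h2))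
  have hrne : ∃ i j, i ≠ j ∧ r i j = true := by
    obtain ⟨i, j, hij, h⟩ := hne
    exact ⟨i, j, hij, (hr i j).mpr h⟩
  have hcard : ∀ (s : Set (Fin 3)), 3 ≤ s.ncard ↔ ∀ x, x ∈ s := by
    intro s
    constructor
    · intro h x
      have hs : s = Set.univ := by
        apply Set.eq_of_subset_of_ncard_le (Set.subset_univ s)
        rw [Set.ncard_univ, Nat.card_eq_fintype_card, Fintype.card_fin]
        exact h
      rw [hs]; trivial
    · intro h
      rw [Set.eq_univ_of_forall h, Set.ncard_univ, Nat.card_eq_fintype_card, Fintype.card_fin]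
  constructor
  · -- part 1
    simp only [hcard, Set.mem_inter_iff, Set.mem_union, Set.mem_setOf_eq]
    simp only [← hr]
    exact key1 r hrrefl hrtrans hrne
  · -- part 2
    have hsets : ∀ (π : Equiv.Perm (Fin 3)) (c : Fin 3 → ℕ),
        ({Y : Matrix (Fin 3) (Fin 3) ℂ | ∃ X ∈
              {X : Matrix (Fin 3) (Fin 3) ℂ | ∀ i j, ¬ ρ i j → X i j = 0},
            Y = (Matrix.of fun k l => if π k = l then (1 : ℂ) else 0) * X *
              (Matrix.of fun k l => if π k = l then (1 : ℂ) else 0)⁻¹} =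
          {X : Matrix (Fin 3) (Fin 3) ℂ | X.BlockTriangular c}) ↔
        (∀ i j, ρ (π i) (π j) ↔ c i ≤ c j) := by
      intro π c
      have hconj : {Y : Matrix (Fin 3) (Fin 3) ℂ | ∃ X ∈
              {X : Matrix (Fin 3) (Fin 3) ℂ | ∀ i j, ¬ ρ i j → X i j = 0},
            Y = (Matrix.of fun k l => if π k = l then (1 : ℂ) else 0) * X *
              (Matrix.of fun k l => if π k = l then (1 : ℂ) else 0)⁻¹} =
          {Y : Matrix (Fin 3) (Fin 3) ℂ | ∀ i j, ¬ ρ (π i) (π j) → Y i j = 0} := by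
        ext Y
        simp only [Set.mem_setOf_eq]
        constructor
        · rintro ⟨X, hX, rfl⟩ i j hij
          rw [conj_apply]
          exact hX (π i) (π j) hij
        · intro hY
          refine ⟨Y.submatrix π.symm π.symm, fun i j hij => ?_, ?_⟩
          · have : ¬ ρ (π (π.symm i)) (π (π.symm j)) := by
              rwa [Equiv.apply_symm_apply, Equiv.apply_symm_apply]
            exact hY _ _ this
          · rw [conj_apply]
            ext i j
            simp
      have hbt : {X : Matrix (Fin 3) (Fin 3) ℂ | X.BlockTriangular c} =
          {Y : Matrix (Fin 3) (Fin 3) ℂ | ∀ i j, ¬ (c i ≤ c j) → Y i j = 0} := by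
        ext X
        simp only [Set.mem_setOf_eq, Matrix.BlockTriangular]
        constructor
        · intro hX i j hij
          exact hX (not_le.mp hij)
        · intro hX i j hij
          exact hX _ _ (not_le.mpr hij)
      rw [hconj, hbt]
      constructor
      · intro h i j
        constructor
        · exact patt_mp _ _ h.le i j
        · exact patt_mp _ _ h.ge i j
      · intro h
        ext X
        simp only [Set.mem_setOf_eq]
        constructor
        · intro hX i j hij
          exact hX i j (fun hc => hij ((h i j).mp hc))
        · intro hX i j hij
          exact hX i j (fun hc => hij ((h i j).mpr hc))
    have hmain : (∃ i j : Fin 3, i ≠ j ∧ (∀ k, ρ i k) ∧ (∀ k, ρ k j)) ↔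
        (∃ π : Equiv.Perm (Fin 3), ∃ c : Fin 3 → ℕ, Monotone c ∧
          ∀ i j, ρ (π i) (π j) ↔ c i ≤ c j) := by
      simp only [← hr]
      exact key2' r hrrefl hrtrans
    rw [hmain]
    exact exists_congr fun π => exists_congr fun c =>
      and_congr_right fun _ => (hsets π c).symm
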